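/- If F is a hypergraph containing either (i) an edge with at least 3 vertices, or (ii) two separated two-element edges (edges E_1, E_2 with max E_1 < min E_2), or (iii) a path ({a,b},{b,c}) with a < b < c among its two-element edges, or (iv) a repeated two-element edge, then ex_e(F,n) ≥ floor(n/2)·ceil(n/2), witnessed by the complete bipartite ordered graph with parts [floor(n/2)] and [floor(n/2)+1, n]. -/

import Mathlib

/-- The set of vertices of a hypergraph given as a list of finite edges. -/
def vset (H : List (Finset ℕ)) : Finset ℕ := H.foldr (· ∪ ·) ∅

/-- The number of vertices `v(H)`. -/
def nv (H : List (Finset ℕ)) : ℕ := (vset H).card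

/-- The weight `i(H)`, the number of vertex-edge incidences. -/
def iw (H : List (Finset ℕ)) : ℕ := (H.map Finset.card).sum

/-- A hypergraph is simple if its edges are distinct (and nonempty). -/
def HSimple (H : List (Finset ℕ)) : Prop := H.Nodup ∧ ∀ E ∈ H, E.Nonempty

/-- Ordered hypergraph containment: an increasing vertex injection together with an
injective assignment of edges such that each edge of `F` maps vertex-wise into its image. -/
def HContains (H F : List (Finset ℕ)) : Prop :=
  ∃ (φ : ℕ → ℕ) (f : Fin F.length → Fin H.length),
    StrictMono φ ∧ Function.Injective f ∧
      ∀ i : Fin F.length, ∀ v ∈ F.get i, φ v ∈ H.get (f i)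

/-- `ex_e(F,n)`: max number of edges of a simple `F`-free hypergraph on at most `n` vertices. -/
noncomputable def exE (F : List (Finset ℕ)) (n : ℕ) : ℕ :=
  sSup {m | ∃ H, HSimple H ∧ ¬ HContains H F ∧ nv H ≤ n ∧ H.length = m}

/-- `ex_i(F,n)`: max weight of a simple `F`-free hypergraph on at most `n` vertices. -/
noncomputable def exI (F : List (Finset ℕ)) (n : ℕ) : ℕ :=
  sSup {m | ∃ H, HSimple H ∧ ¬ HContains H F ∧ nv H ≤ n ∧ iw H = m}

/-- A hypergraph is a graph if all edges have two vertices. -/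
def IsGraphH (H : List (Finset ℕ)) : Prop := ∀ E ∈ H, E.card = 2

/-- `gex(B,n)` for a family `B` of ordered graphs. -/
noncomputable def gexSet (B : Set (List (Finset ℕ))) (n : ℕ) : ℕ :=
  sSup {m | ∃ G, HSimple G ∧ IsGraphH G ∧ (∀ F ∈ B, ¬ HContains G F) ∧ nv G ≤ n ∧ G.length = m}

/-- `gex(F,n)` for a single ordered graph. -/
noncomputable def gex (F : List (Finset ℕ)) (n : ℕ) : ℕ := gexSet {F} n

/-- `G'` is a `k`-blow-up of `G`: every edge colouring of `G'` using each colour at most `k`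
times admits an ordered copy of `G` with pairwise distinct colours. -/
def IsBlowup (k : ℕ) (G' G : List (Finset ℕ)) : Prop :=
  ∀ χ : Fin G'.length → ℕ,
    (∀ c : ℕ, (Finset.univ.filter fun i => χ i = c).card ≤ k) →
    ∃ (φ : ℕ → ℕ) (f : Fin G.length → Fin G'.length),
      StrictMono φ ∧ Function.Injective f ∧
      (∀ i : Fin G.length, ∀ v ∈ G.get i, φ v ∈ G'.get (f i)) ∧
      Function.Injective (χ ∘ f)

/-- The hierarchy `F_1(n) = 2n`, `F_{i+1}(n) = F_i iterated n times starting at 1`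
(indexed from 0, so `Fiter i = F_{i+1}`). -/
def Fiter : ℕ → ℕ → ℕ
  | 0, n => 2 * n
  | i+1, n => (Fiter i)^[n] 1

/-- The Ackermann function `A(n) = F_n(n)`. -/
def Ack (n : ℕ) : ℕ := Fiter (n - 1) n

/-- The inverse Ackermann function `α(n) = min {m : A(m) ≥ n}`. -/
noncomputable def invAck (n : ℕ) : ℕ := sInf {m | n ≤ Ack m}

/-- The almost constant factor `β(k,l,n)` from the generalized Davenport–Schinzel bound. -/
noncomputable def DSbeta (k l n : ℕ) : ℕ :=
  k * 2 ^ (k * l - 3) * (10 * k) ^ (2 * (invAck n) ^ (k * l - 4) + 8 * (invAck n) ^ (k * l - 5))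

/-- The ordered graph `G_1 = ({1,3},{1,5},{2,3},{2,4})`. -/
def G1 : List (Finset ℕ) := [{1,3}, {1,5}, {2,3}, {2,4}]

/-- A `k`-multiple of `G_1`. -/
def IsMultiple (k : ℕ) (G : List (Finset ℕ)) : Prop :=
  HSimple G ∧ IsGraphH G ∧
  ∃ (A B C : Finset ℕ) (v : ℕ),
    A.card = k ∧ (∀ a ∈ A, a < v) ∧ (∀ b ∈ B, v < b) ∧
    (∀ b ∈ B, ∀ c ∈ C, b < c) ∧
    vset G = A ∪ {v} ∪ B ∪ C ∧
    (∀ a ∈ A, ({a, v} : Finset ℕ) ∈ G) ∧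
    (∀ a ∈ A, (B.filter fun b => ({a, b} : Finset ℕ) ∈ G).card = k) ∧
    (∀ a ∈ A, (C.filter fun c => ({a, c} : Finset ℕ) ∈ G).card = k) ∧
    (∀ E ∈ G, (∃ a ∈ A, E = {a, v}) ∨ (∃ a ∈ A, ∃ w ∈ B ∪ C, E = {a, w}))


/-- Auxiliary: the complete bipartite ordered graph. -/
def KK (n : ℕ) : List (Finset ℕ) :=
  (List.range (n / 2)).flatMap fun i =>
    (List.range ((n + 1) / 2)).map fun j => ({i + 1, n / 2 + j + 1} : Finset ℕ)

lemma mem_vset {H : List (Finset ℕ)} {v : ℕ} : v ∈ vset H ↔ ∃ E ∈ H, v ∈ E := by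
  induction H with
  | nil => simp [vset]
  | cons E t ih =>
    simp only [vset, List.foldr_cons] at ih ⊢
    simp [Finset.mem_union, ih]

lemma KK_struct {n : ℕ} {E : Finset ℕ} (h : E ∈ KK n) :
    ∃ a b, 1 ≤ a ∧ a ≤ n / 2 ∧ n / 2 < b ∧ b ≤ n ∧ E = {a, b} := by
  simp only [KK, List.mem_flatMap, List.mem_map, List.mem_range] at h
  obtain ⟨i, hi, j, hj, rfl⟩ := h
  exact ⟨i + 1, n / 2 + j + 1, by omega, by omega, by omega, by omega, rfl⟩

lemma KK_nodup (n : ℕ) : (KK n).Nodup := by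
  rw [KK, List.nodup_flatMap]
  constructor
  · intro i hi
    simp only [List.mem_range] at hi
    refine List.Nodup.map ?_ List.nodup_range
    intro j j' hjj'
    replace hjj' : ({i + 1, n / 2 + j + 1} : Finset ℕ) = {i + 1, n / 2 + j' + 1} := hjj'
    have h1 : n / 2 + j + 1 ∈ ({i + 1, n / 2 + j' + 1} : Finset ℕ) := by
      rw [← hjj']; simp
    simp only [Finset.mem_insert, Finset.mem_singleton] at h1
    omega
  · refine List.pairwise_lt_range.imp_of_mem ?_
    intro i i' hi hi' hlt
    simp only [List.mem_range] at hi hi'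
    intro E hE hE'
    simp only [List.mem_map, List.mem_range] at hE hE'
    obtain ⟨j, hj, rfl⟩ := hE
    obtain ⟨j', hj', hEq⟩ := hE'
    have h1 : i' + 1 ∈ ({i + 1, n / 2 + j + 1} : Finset ℕ) := by
      rw [← hEq]; simp
    simp only [Finset.mem_insert, Finset.mem_singleton] at h1
    omega

lemma KK_length (n : ℕ) : (KK n).length = n / 2 * ((n + 1) / 2) := by
  simp [KK, List.length_flatMap, Function.comp_def, List.map_const', List.sum_replicate,
    smul_eq_mul, Nat.mul_comm]

lemma KK_nv (n : ℕ) : nv (KK n) ≤ n := by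
  have hsub : vset (KK n) ⊆ Finset.Icc 1 n := by
    intro v hv
    obtain ⟨E, hE, hvE⟩ := mem_vset.mp hv
    obtain ⟨a, b, h1, h2, h3, h4, rfl⟩ := KK_struct hE
    simp only [Finset.mem_insert, Finset.mem_singleton] at hvE
    simp only [Finset.mem_Icc]
    omega
  calc nv (KK n) ≤ (Finset.Icc 1 n).card := Finset.card_le_card hsub
    _ = n := by rw [Nat.card_Icc]; omega

lemma pair_order {a b u w : ℕ} (hab : a < b) (hu : u ∈ ({a, b} : Finset ℕ))
    (hw : w ∈ ({a, b} : Finset ℕ)) (huw : u < w) : u = a ∧ w = b := by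
  simp only [Finset.mem_insert, Finset.mem_singleton] at hu hw
  omega

lemma two_mem {s : Finset ℕ} (h : s.card = 2) : ∃ x y : ℕ, x < y ∧ s = {x, y} := by
  obtain ⟨x, y, hxy, rfl⟩ := Finset.card_eq_two.mp h
  rcases lt_or_gt_of_ne hxy with h' | h'
  · exact ⟨x, y, h', rfl⟩
  · exact ⟨y, x, h', by rw [Finset.pair_comm]⟩

lemma KK_not_contains (F : List (Finset ℕ))
    (hcase : (∃ E ∈ F, 3 ≤ E.card) ∨
      (∃ i j : Fin F.length, (F.get i).card = 2 ∧ (F.get j).card = 2 ∧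
        ∀ x ∈ F.get i, ∀ y ∈ F.get j, x < y) ∨
      (∃ a b c : ℕ, a < b ∧ b < c ∧ ({a, b} : Finset ℕ) ∈ F ∧ ({b, c} : Finset ℕ) ∈ F) ∨
      (∃ i j : Fin F.length, i ≠ j ∧ F.get i = F.get j ∧ (F.get i).card = 2))
    (n : ℕ) : ¬ HContains (KK n) F := by
  rintro ⟨φ, f, hφ, hf, hmap⟩
  rcases hcase with ⟨E, hEF, hE3⟩ | ⟨i, j, h2i, h2j, hlt⟩ |
      ⟨a, b, c, hab, hbc, habF, hbcF⟩ | ⟨i, j, hij, hEq, h2⟩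
  · -- big edge
    obtain ⟨i, hi⟩ := List.mem_iff_get.mp hEF
    obtain ⟨p, q, _, _, hpq, _, hKi⟩ := KK_struct (List.get_mem (KK n) (f i))
    have hsub : E.image φ ⊆ (KK n).get (f i) := by
      intro x hx
      obtain ⟨v, hv, rfl⟩ := Finset.mem_image.mp hx
      exact hmap i v (hi ▸ hv)
    have := Finset.card_le_card hsub
    rw [Finset.card_image_of_injective _ hφ.injective, hKi,
      Finset.card_pair (by omega)] at this
    omega
  · -- separated edges
    obtain ⟨x1, x2, hx12, hxi⟩ := two_mem h2i
    obtain ⟨y1, y2, hy12, hyj⟩ := two_mem h2j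
    obtain ⟨p, q, _, hp, hpq, _, hKi⟩ := KK_struct (List.get_mem (KK n) (f i))
    obtain ⟨p', q', _, hp', hpq', _, hKj⟩ := KK_struct (List.get_mem (KK n) (f j))
    have hx2 : φ x2 = q := by
      have h1 := hmap i x1 (by rw [hxi]; simp)
      have h2 := hmap i x2 (by rw [hxi]; simp)
      rw [hKi] at h1 h2
      exact (pair_order (by omega) h1 h2 (hφ hx12)).2
    have hy1 : φ y1 = p' := by
      have h1 := hmap j y1 (by rw [hyj]; simp)
      have h2 := hmap j y2 (by rw [hyj]; simp)
      rw [hKj] at h1 h2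
      exact (pair_order (by omega) h1 h2 (hφ hy12)).1
    have hx2y1 : x2 < y1 := hlt x2 (by rw [hxi]; simp) y1 (by rw [hyj]; simp)
    have := hφ hx2y1
    omega
  · -- path
    obtain ⟨i, hi⟩ := List.mem_iff_get.mp habF
    obtain ⟨j, hj⟩ := List.mem_iff_get.mp hbcF
    obtain ⟨p, q, _, hp, hpq, _, hKi⟩ := KK_struct (List.get_mem (KK n) (f i))
    obtain ⟨p', q', _, hp', hpq', _, hKj⟩ := KK_struct (List.get_mem (KK n) (f j))
    have hb1 : φ b = q := by
      have h1 := hmap i a (by rw [hi]; simp)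
      have h2 := hmap i b (by rw [hi]; simp)
      rw [hKi] at h1 h2
      exact (pair_order (by omega) h1 h2 (hφ hab)).2
    have hb2 : φ b = p' := by
      have h1 := hmap j b (by rw [hj]; simp)
      have h2 := hmap j c (by rw [hj]; simp)
      rw [hKj] at h1 h2
      exact (pair_order (by omega) h1 h2 (hφ hbc)).1
    omega
  · -- repeated edge
    obtain ⟨x, y, hxy, hxi⟩ := two_mem h2
    obtain ⟨p, q, _, hp, hpq, _, hKi⟩ := KK_struct (List.get_mem (KK n) (f i))
    obtain ⟨p', q', _, hp', hpq', _, hKj⟩ := KK_struct (List.get_mem (KK n) (f j))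
    have hxi' : F.get j = {x, y} := hEq ▸ hxi
    have e1 : φ x = p ∧ φ y = q := by
      have h1 := hmap i x (by rw [hxi]; simp)
      have h2 := hmap i y (by rw [hxi]; simp)
      rw [hKi] at h1 h2
      exact pair_order (by omega) h1 h2 (hφ hxy)
    have e2 : φ x = p' ∧ φ y = q' := by
      have h1 := hmap j x (by rw [hxi']; simp)
      have h2 := hmap j y (by rw [hxi']; simp)
      rw [hKj] at h1 h2
      exact pair_order (by omega) h1 h2 (hφ hxy)
    have hsame : (KK n).get (f i) = (KK n).get (f j) := by
      rw [hKi, hKj, ← e1.1, ← e1.2, e2.1, e2.2]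
    exact hij (hf (((KK_nodup n).get_inj_iff).mp hsame))

lemma edge_subset_vset {H : List (Finset ℕ)} {E : Finset ℕ} (h : E ∈ H) : E ⊆ vset H :=
  fun v hv => mem_vset.mpr ⟨E, h, hv⟩

lemma length_le_of_simple {H : List (Finset ℕ)} (hs : HSimple H) (n : ℕ) (hn : nv H ≤ n) :
    H.length ≤ 2 ^ n := by
  have h1 : H.length = H.toFinset.card := (List.toFinset_card_of_nodup hs.1).symm
  have h2 : H.toFinset ⊆ (vset H).powerset := by
    intro E hE
    rw [List.mem_toFinset] at hE
    exact Finset.mem_powerset.mpr (edge_subset_vset hE)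
  calc H.length = H.toFinset.card := h1
    _ ≤ (vset H).powerset.card := Finset.card_le_card h2
    _ = 2 ^ nv H := by rw [Finset.card_powerset]; rfl
    _ ≤ 2 ^ n := Nat.pow_le_pow_right (by norm_num) hn

/-- If the hypergraph `F` has an edge with at least 3 vertices, or two separated two-element
edges, or a two-path `({a,b},{b,c})`, or a repeated two-element edge, then the complete
bipartite ordered graph with parts `[⌊n/2⌋]` and `[⌊n/2⌋+1,n]` is `F`-free, whence
`ex_e(F,n) ≥ ⌊n/2⌋·⌈n/2⌉`. -/
theorem stmt17 (F : List (Finset ℕ)) (hFne : ∀ E ∈ F, E.Nonempty)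
    (hcase : (∃ E ∈ F, 3 ≤ E.card) ∨
      (∃ i j : Fin F.length, (F.get i).card = 2 ∧ (F.get j).card = 2 ∧
        ∀ x ∈ F.get i, ∀ y ∈ F.get j, x < y) ∨
      (∃ a b c : ℕ, a < b ∧ b < c ∧ ({a, b} : Finset ℕ) ∈ F ∧ ({b, c} : Finset ℕ) ∈ F) ∨
      (∃ i j : Fin F.length, i ≠ j ∧ F.get i = F.get j ∧ (F.get i).card = 2))
    (n : ℕ) (K : List (Finset ℕ))
    (hK : K = (List.range (n / 2)).flatMap fun i =>
      (List.range ((n + 1) / 2)).map fun j => ({i + 1, n / 2 + j + 1} : Finset ℕ)) :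
    ¬ HContains K F ∧ n / 2 * ((n + 1) / 2) ≤ exE F n := by
  
  have hKK : K = KK n := hK
  subst hKK
  have hnotc := KK_not_contains F hcase n
  refine ⟨hnotc, ?_⟩
  have hsimple : HSimple (KK n) := by
    refine ⟨KK_nodup n, ?_⟩
    intro E hE
    obtain ⟨a, b, _, _, _, _, rfl⟩ := KK_struct hE
    exact ⟨a, by simp⟩
  have hmem : n / 2 * ((n + 1) / 2) ∈
      {m | ∃ H, HSimple H ∧ ¬ HContains H F ∧ nv H ≤ n ∧ H.length = m} :=
    ⟨KK n, hsimple, hnotc, KK_nv n, KK_length n⟩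
  have hbdd : BddAbove {m | ∃ H, HSimple H ∧ ¬ HContains H F ∧ nv H ≤ n ∧ H.length = m} := by
    refine ⟨2 ^ n, ?_⟩
    rintro m ⟨H, hs, -, hn, rfl⟩
    exact length_le_of_simple hs n hn
  exact le_csSup hbdd hmem
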